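/- Let R be a finite commutative chain ring with maximal ideal ⟨γ⟩, nilpotency index s, and residue field of size q, and set M = q/(q-1). Let n = q + 1 and let C ⊆ R^n be a linear code of rank K = 2 which is MHD, i.e., d_Hom(C) > M·(n - 2) = q. Then C ⊆ ⟨γ^{s-1}⟩^n, i.e., every codeword of C lies in the socle. -/

import Mathlib

open scoped BigOperators Classical

set_option linter.unusedSectionVars false
set_option linter.unusedVariables false
set_option maxHeartbeats 1000000

/-- The normalized homogeneous weight on a finite chain ring with maximal ideal `⟨γ⟩`,
nilpotency index `s` and residue field of size `q`. -/
noncomputable def wtHom {R : Type*} [CommRing R] (γ : R) (s q : ℕ) (x : R) : ℚ :=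
  if x = 0 then 0
  else if x ∈ Ideal.span {γ ^ (s - 1)} then (q : ℚ) / ((q : ℚ) - 1)
  else 1

/-- Homogeneous weight of a vector: the sum of the weights of its coordinates. -/
noncomputable def wtHomV {R : Type*} [CommRing R] (γ : R) (s q : ℕ) {n : ℕ}
    (v : Fin n → R) : ℚ :=
  ∑ i, wtHom γ s q (v i)

/-- Hamming weight of a vector: the number of nonzero coordinates. -/
noncomputable def hWt {R : Type*} [Zero R] {n : ℕ} (v : Fin n → R) : ℕ :=
  Nat.card {i : Fin n // v i ≠ 0}

/-- `K` is the rank of the code `C`: the least cardinality of a generating set of `C`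
as an `R`-module. -/
def IsCodeRank {R : Type*} [CommRing R] {n : ℕ} (C : Submodule R (Fin n → R)) (K : ℕ) : Prop :=
  IsLeast {k : ℕ | ∃ S : Finset (Fin n → R),
    S.card = k ∧ Submodule.span R (S : Set (Fin n → R)) = C} K

/-- The socle of a code: the codewords all of whose coordinates lie in `⟨γ^(s-1)⟩`. -/
def socleCode {R : Type*} [CommRing R] (γ : R) (s : ℕ) {n : ℕ}
    (C : Submodule R (Fin n → R)) : Submodule R (Fin n → R) :=
  C ⊓ Submodule.pi Set.univ (fun _ : Fin n => Ideal.span {γ ^ (s - 1)})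

section ChainAux
variable {R : Type*} [CommRing R] [IsLocalRing R]

/-- In a local ring with `γ^s = 0` and maximal ideal `⟨γ⟩`, every nonzero element is a
unit times a power of `γ`. -/
lemma exists_unit_rep (γ : R) (s : ℕ) (hnil : γ ^ s = 0)
    (hmax : IsLocalRing.maximalIdeal R = Ideal.span {γ}) {x : R} (hx : x ≠ 0) :
    ∃ t : ℕ, t < s ∧ ∃ u : Rˣ, x = (u : R) * γ ^ t := by
  have h0 : x ∈ Ideal.span {γ ^ 0} := by simp [Ideal.mem_span_singleton]
  have hsF : ¬ x ∈ Ideal.span {γ ^ s} := by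
    simp only [hnil, Ideal.mem_span_singleton, zero_dvd_iff]; exact hx
  have hts : Nat.findGreatest (fun t => x ∈ Ideal.span {γ ^ t}) s ≤ s := Nat.findGreatest_le s
  have hPt : x ∈ Ideal.span {γ ^ Nat.findGreatest (fun t => x ∈ Ideal.span {γ ^ t}) s} :=
    Nat.findGreatest_spec (P := fun t => x ∈ Ideal.span {γ ^ t}) (Nat.zero_le s) h0
  set t := Nat.findGreatest (fun t => x ∈ Ideal.span {γ ^ t}) s with ht
  have htlt : t < s := lt_of_le_of_ne hts (by rintro h; rw [h] at hPt; exact hsF hPt)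
  have hnot : ¬ x ∈ Ideal.span {γ ^ (t + 1)} :=
    Nat.findGreatest_is_greatest (Nat.lt_succ_self t) htlt
  obtain ⟨c, hc⟩ := Ideal.mem_span_singleton.mp hPt
  have hcu : IsUnit c := by
    by_contra hcu
    have hm : c ∈ Ideal.span {γ} := by
      rw [← hmax]; exact (IsLocalRing.mem_maximalIdeal c).mpr hcu
    obtain ⟨b, hb⟩ := Ideal.mem_span_singleton.mp hm
    apply hnot
    rw [Ideal.mem_span_singleton]
    exact ⟨b, by rw [hc, hb]; ring⟩
  exact ⟨t, htlt, hcu.unit, by rw [hc, IsUnit.unit_spec]; ring⟩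

lemma pow_le_of_mem_span (γ : R) (s : ℕ) (hnil : γ ^ s = 0) (hnil' : γ ^ (s - 1) ≠ 0)
    {a b : ℕ} (ha : a ≤ s - 1) (h : γ ^ a ∈ Ideal.span {γ ^ b}) : b ≤ a := by
  by_contra hba
  push_neg at hba
  obtain ⟨c, hc⟩ := Ideal.mem_span_singleton.mp h
  apply hnil'
  have h1 : γ ^ (s - 1) = γ ^ a * γ ^ (s - 1 - a) := by
    rw [← pow_add]; congr 1; omega
  have h2 : γ ^ (b + (s - 1 - a)) = 0 := by
    have : γ ^ (b + (s - 1 - a)) = γ ^ s * γ ^ (b + (s - 1 - a) - s) := by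
      rw [← pow_add]; congr 1; omega
    rw [this, hnil, zero_mul]
  calc γ ^ (s-1) = γ ^ a * γ ^ (s-1-a) := h1
    _ = γ ^ b * c * γ ^ (s-1-a) := by rw [hc]
    _ = c * γ ^ (b + (s-1-a)) := by rw [pow_add]; ring
    _ = 0 := by rw [h2, mul_zero]

lemma unit_mul_mem_span (γ : R) {b t : ℕ} (u : Rˣ) :
    (u : R) * γ ^ t ∈ Ideal.span {γ ^ b} ↔ γ ^ t ∈ Ideal.span {γ ^ b} := by
  rw [Ideal.mem_span_singleton, Ideal.mem_span_singleton, Units.dvd_mul_left]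

lemma pow_mem_span_pow (γ : R) {a b : ℕ} (h : b ≤ a) : γ ^ a ∈ Ideal.span {γ ^ b} := by
  rw [Ideal.mem_span_singleton]
  exact ⟨γ ^ (a - b), by rw [← pow_add]; congr 1; omega⟩

lemma rep_exact (γ : R) (s : ℕ) (hnil : γ ^ s = 0) (hnil' : γ ^ (s - 1) ≠ 0)
    (hmax : IsLocalRing.maximalIdeal R = Ideal.span {γ}) {x : R} {a : ℕ} (ha : a ≤ s - 1)
    (h1 : x ∈ Ideal.span {γ ^ a}) (h2 : x ∉ Ideal.span {γ ^ (a + 1)}) :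
    ∃ u : Rˣ, x = (u : R) * γ ^ a := by
  have hx : x ≠ 0 := by rintro rfl; exact h2 (Ideal.zero_mem _)
  obtain ⟨t, hts, u, hu⟩ := exists_unit_rep γ s hnil hmax hx
  have h1' : γ ^ t ∈ Ideal.span {γ ^ a} := (unit_mul_mem_span γ u).mp (hu ▸ h1)
  have hat : a ≤ t := pow_le_of_mem_span γ s hnil hnil' (by omega) h1'
  have hta : t ≤ a := by
    by_contra hta
    exact h2 (hu ▸ (unit_mul_mem_span γ u).mpr (pow_mem_span_pow γ (by omega)))
  have : t = a := le_antisymm hta hat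
  exact ⟨u, this ▸ hu⟩

lemma mem_span_of_pow_mul_eq_zero (γ : R) (s : ℕ) (hnil : γ ^ s = 0) (hnil' : γ ^ (s - 1) ≠ 0)
    (hmax : IsLocalRing.maximalIdeal R = Ideal.span {γ}) {k : ℕ} (hk : k ≤ s) {x : R}
    (h : γ ^ k * x = 0) : x ∈ Ideal.span {γ ^ (s - k)} := by
  by_cases hx : x = 0
  · simp [hx]
  obtain ⟨t, hts, u, hu⟩ := exists_unit_rep γ s hnil hmax hx
  have hpow : γ ^ (k + t) = 0 := by
    have h0 : (u : R) * γ ^ (k + t) = 0 := by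
      rw [pow_add]; rw [hu] at h
      calc (u:R) * (γ^k * γ^t) = γ^k * ((u:R) * γ^t) := by ring
        _ = 0 := h
    have := congrArg (fun y => ((u⁻¹ : Rˣ) : R) * y) h0
    simpa [← mul_assoc] using this
  have hst : s - k ≤ t := by
    by_contra hc
    push_neg at hc
    apply hnil'
    have : γ ^ (s - 1) = γ ^ (k + t) * γ ^ (s - 1 - k - t) := by
      rw [← pow_add]; congr 1; omega
    rw [this, hpow, zero_mul]
  rw [hu]
  exact (unit_mul_mem_span γ u).mpr (pow_mem_span_pow γ hst)

/-- representation of nonzero socle elements -/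
lemma socle_rep (γ : R) (s : ℕ) (hnil : γ ^ s = 0) (hnil' : γ ^ (s - 1) ≠ 0)
    (hmax : IsLocalRing.maximalIdeal R = Ideal.span {γ}) {x : R}
    (h1 : x ∈ Ideal.span {γ ^ (s - 1)}) (hx : x ≠ 0) :
    ∃ u : Rˣ, x = (u : R) * γ ^ (s - 1) := by
  obtain ⟨t, hts, u, hu⟩ := exists_unit_rep γ s hnil hmax hx
  have h1' : γ ^ t ∈ Ideal.span {γ ^ (s-1)} := (unit_mul_mem_span γ u).mp (hu ▸ h1)
  have hat : s - 1 ≤ t := pow_le_of_mem_span γ s hnil hnil' (by omega) h1'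
  have : t = s - 1 := by omega
  exact ⟨u, this ▸ hu⟩

lemma unit_s2_not_socle (γ : R) (s : ℕ) (hs2 : 2 ≤ s) (hnil : γ ^ s = 0)
    (hnil' : γ ^ (s - 1) ≠ 0) (u : Rˣ) :
    (u : R) * γ ^ (s - 2) ∉ Ideal.span {γ ^ (s - 1)} := by
  intro h
  have h' : γ ^ (s-2) ∈ Ideal.span {γ ^ (s-1)} := (unit_mul_mem_span γ u).mp h
  have := pow_le_of_mem_span γ s hnil hnil' (a := s-2) (b := s-1) (by omega) h'
  omega

/-- the key structure lemma: if the socle of `C` is contained in a cyclic module,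
then `C` is cyclic -/
lemma cyclic_of_socle_cyclic {n : ℕ} (γ : R) (s : ℕ) (hs : 1 ≤ s) (hnil : γ ^ s = 0)
    (hnil' : γ ^ (s - 1) ≠ 0) (hmax : IsLocalRing.maximalIdeal R = Ideal.span {γ})
    (C : Submodule R (Fin n → R)) (d₀ : Fin n → R) (hd₀C : d₀ ∈ C) (hd₀n : d₀ ≠ 0)
    (hd₀soc : ∀ i, d₀ i ∈ Ideal.span {γ ^ (s - 1)})
    (hsub : ∀ d ∈ C, (∀ i, d i ∈ Ideal.span {γ ^ (s - 1)}) → d ∈ Submodule.span R {d₀}) :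
    ∃ x, C = Submodule.span R {x} := by
  have hQ : ∃ t, ∃ y, y ∈ C ∧ ∃ j, y j ∉ Ideal.span {γ ^ (t + 1)} := by
    obtain ⟨j, hj⟩ : ∃ j, d₀ j ≠ 0 := by
      by_contra h; push_neg at h; exact hd₀n (funext h)
    refine ⟨s - 1, d₀, hd₀C, j, ?_⟩
    have : s - 1 + 1 = s := by omega
    rw [this, hnil]
    simp only [Ideal.mem_span_singleton, zero_dvd_iff]
    exact hj
  set t := Nat.find hQ with htdef
  obtain ⟨x, hxC, j₀, hj₀⟩ := Nat.find_spec hQ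
  have hall : ∀ y, y ∈ C → ∀ j, y j ∈ Ideal.span {γ ^ t} := by
    intro y hy j
    rcases Nat.eq_zero_or_pos t with h0 | hpos
    · rw [h0]; simp [Ideal.mem_span_singleton]
    · have := Nat.find_min hQ (m := t - 1) (by omega)
      push_neg at this
      have h := this y hy j
      have : t - 1 + 1 = t := by omega
      rwa [this] at h
  have hxj₀ : x j₀ ∈ Ideal.span {γ ^ t} := hall x hxC j₀
  have hxne : x j₀ ≠ 0 := by rintro h; exact hj₀ (h ▸ Ideal.zero_mem _)
  have hts : t ≤ s - 1 := by
    by_contra hc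
    push_neg at hc
    apply hxne
    have : γ ^ t = 0 := by
      have : γ ^ t = γ ^ s * γ ^ (t - s) := by rw [← pow_add]; congr 1; omega
      rw [this, hnil, zero_mul]
    obtain ⟨c, hc'⟩ := Ideal.mem_span_singleton.mp hxj₀
    rw [hc', this, zero_mul]
  obtain ⟨u, hu⟩ := rep_exact γ s hnil hnil' hmax hts hxj₀ hj₀
  set dx : Fin n → R := γ ^ (s - 1 - t) • x with hdx
  have hdxC : dx ∈ C := C.smul_mem _ hxC
  have hdxsoc : ∀ j, dx j ∈ Ideal.span {γ ^ (s - 1)} := by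
    intro j
    obtain ⟨a, ha⟩ := Ideal.mem_span_singleton.mp (hall x hxC j)
    rw [hdx, Pi.smul_apply, smul_eq_mul, ha, Ideal.mem_span_singleton]
    exact ⟨a, by rw [← mul_assoc, ← pow_add]; congr 2; omega⟩
  have hdxj₀ : dx j₀ = (u : R) * γ ^ (s - 1) := by
    rw [hdx, Pi.smul_apply, smul_eq_mul, hu]
    rw [show γ ^ (s-1-t) * ((u:R) * γ ^ t) = (u:R) * (γ ^ (s-1-t) * γ ^ t) by ring, ← pow_add]
    congr 2
    omega
  have hdxne : dx j₀ ≠ 0 := by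
    rw [hdxj₀]
    intro h
    apply hnil'
    have := congrArg (fun z => ((u⁻¹ : Rˣ) : R) * z) h
    simpa [← mul_assoc] using this
  obtain ⟨r, hr⟩ := Submodule.mem_span_singleton.mp (hsub dx hdxC hdxsoc)
  have hrunit : IsUnit r := by
    by_contra hru
    have hm : r ∈ Ideal.span {γ} := by
      rw [← hmax]; exact (IsLocalRing.mem_maximalIdeal r).mpr hru
    obtain ⟨b, hb⟩ := Ideal.mem_span_singleton.mp hm
    apply hdxne
    obtain ⟨a, ha⟩ := Ideal.mem_span_singleton.mp (hd₀soc j₀)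
    have := congrFun hr j₀
    rw [Pi.smul_apply, smul_eq_mul] at this
    rw [← this, ha, hb]
    rw [show γ * b * (γ ^ (s-1) * a) = b * a * (γ ^ (s-1) * γ) by ring, ← pow_succ]
    rw [show s - 1 + 1 = s by omega, hnil, mul_zero]
  have hsub' : ∀ d, d ∈ C → (∀ i, d i ∈ Ideal.span {γ ^ (s - 1)}) → ∃ a : R, d = a • dx := by
    intro d hd hdsoc
    obtain ⟨c, hc⟩ := Submodule.mem_span_singleton.mp (hsub d hd hdsoc)
    refine ⟨c * ((hrunit.unit⁻¹ : Rˣ) : R), ?_⟩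
    have h1 : ((hrunit.unit⁻¹ : Rˣ) : R) * r = 1 := hrunit.val_inv_mul
    rw [← hc, ← hr, smul_smul, mul_assoc, h1, mul_one]
  have key : ∀ k, k ≤ s → ∀ y, y ∈ C → (∀ j, y j ∈ Ideal.span {γ ^ (s - k)}) →
      y ∈ Submodule.span R {x} := by
    intro k
    induction k with
    | zero =>
      intro _ y hyC hy
      have : y = 0 := by
        funext j
        have := hy j
        rw [Nat.sub_zero, hnil] at this
        simpa only [Ideal.mem_span_singleton, zero_dvd_iff, Pi.zero_apply] using this
      rw [this]; exact Submodule.zero_mem _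
    | succ k ih =>
      intro hk1 y hyC hy
      by_cases hy' : ∀ j, y j ∈ Ideal.span {γ ^ (s - k)}
      · exact ih (by omega) y hyC hy'
      · push_neg at hy'
        obtain ⟨j₁, hj₁⟩ := hy'
        have htle : t ≤ s - k - 1 := by
          apply Nat.find_min' hQ
          refine ⟨y, hyC, j₁, ?_⟩
          rw [show s - k - 1 + 1 = s - k by omega]
          exact hj₁
        have hsoc : ∀ j, (γ ^ k • y) j ∈ Ideal.span {γ ^ (s - 1)} := by
          intro j
          obtain ⟨a, ha⟩ := Ideal.mem_span_singleton.mp (hy j)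
          rw [Pi.smul_apply, smul_eq_mul, ha, Ideal.mem_span_singleton]
          exact ⟨a, by rw [← mul_assoc, ← pow_add]; congr 2; omega⟩
        obtain ⟨a, ha⟩ := hsub' (γ ^ k • y) (C.smul_mem _ hyC) hsoc
        set z : Fin n → R := (a * γ ^ (s - 1 - t - k)) • x with hz
        have hkz : γ ^ k • z = a • dx := by
          rw [hz, hdx, smul_smul, smul_smul]
          congr 1
          rw [show γ ^ k * (a * γ ^ (s-1-t-k)) = a * (γ ^ k * γ ^ (s-1-t-k)) by ring, ← pow_add]
          congr 2
          omega
        have hyz : ∀ j, (y - z) j ∈ Ideal.span {γ ^ (s - k)} := by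
          intro j
          have h0 : γ ^ k * (y - z) j = 0 := by
            have hj := congrFun ha j
            have hkzj := congrFun hkz j
            simp only [Pi.smul_apply, smul_eq_mul, Pi.sub_apply] at hj hkzj ⊢
            rw [mul_sub, hj, hkzj, sub_self]
          exact mem_span_of_pow_mul_eq_zero γ s hnil hnil' hmax (by omega) h0
        have hyzC : y - z ∈ C := C.sub_mem hyC (C.smul_mem _ hxC)
        have h1 := ih (by omega) (y - z) hyzC hyz
        have h2 : z ∈ Submodule.span R {x} :=
          Submodule.smul_mem _ _ (Submodule.mem_span_singleton_self x)
        have : y = (y - z) + z := by ring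
        rw [this]
        exact Submodule.add_mem _ h1 h2
  refine ⟨x, le_antisymm ?_ ?_⟩
  · intro y hy
    apply key s le_rfl y hy
    intro j
    rw [Nat.sub_self]
    simp [Ideal.mem_span_singleton]
  · rw [Submodule.span_le, Set.singleton_subset_iff]
    exact hxC

end ChainAux

section WtAux
variable {R : Type*} [CommRing R]

lemma wtHom_zero (γ : R) (s q : ℕ) : wtHom γ s q 0 = 0 := if_pos rfl

lemma wtHom_eq_one (γ : R) (s q : ℕ) {x : R} (h : x ∉ Ideal.span {γ ^ (s - 1)}) :
    wtHom γ s q x = 1 := by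
  have hx : x ≠ 0 := fun h0 => h (h0 ▸ Ideal.zero_mem _)
  rw [wtHom, if_neg hx, if_neg h]

lemma wtHom_eq_M (γ : R) (s q : ℕ) {x : R} (h : x ∈ Ideal.span {γ ^ (s - 1)}) (hx : x ≠ 0) :
    wtHom γ s q x = (q : ℚ) / ((q : ℚ) - 1) := by
  rw [wtHom, if_neg hx, if_pos h]

lemma wtHomV_socle (γ : R) (s q : ℕ) {n : ℕ} (v : Fin n → R)
    (h : ∀ i, v i ∈ Ideal.span {γ ^ (s - 1)}) :
    wtHomV γ s q v =
      ((Finset.univ.filter (fun i => v i ≠ 0)).card : ℚ) * ((q : ℚ) / ((q : ℚ) - 1)) := by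
  classical
  rw [wtHomV, ← Finset.sum_filter_add_sum_filter_not Finset.univ (fun i => v i ≠ 0)]
  have h1 : ∑ i ∈ Finset.univ.filter (fun i => v i ≠ 0), wtHom γ s q (v i)
      = ((Finset.univ.filter (fun i => v i ≠ 0)).card : ℚ) * ((q : ℚ) / ((q : ℚ) - 1)) := by
    rw [Finset.sum_congr rfl (fun i hi => wtHom_eq_M γ s q (h i)
      (by simpa using (Finset.mem_filter.mp hi).2)), Finset.sum_const, nsmul_eq_mul]
  have h2 : ∑ i ∈ Finset.univ.filter (fun i => ¬ v i ≠ 0), wtHom γ s q (v i) = 0 := by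
    apply Finset.sum_eq_zero
    intro i hi
    have : v i = 0 := by simpa using (Finset.mem_filter.mp hi).2
    rw [this, wtHom_zero]
  rw [h1, h2, add_zero]

end WtAux

/-- For length `n = q + 1` and rank `K = 2`, any MHD code lies in the socle `⟨γ^(s-1)⟩^n`. -/
theorem mhd_rank_two_in_socle {R : Type*} [CommRing R] [IsLocalRing R] [Fintype R]
    (γ : R) (s q : ℕ) (hs : 1 ≤ s)
    (hmax : IsLocalRing.maximalIdeal R = Ideal.span {γ})
    (hnil : γ ^ s = 0) (hnil' : γ ^ (s - 1) ≠ 0)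
    (hq : Nat.card (R ⧸ IsLocalRing.maximalIdeal R) = q)
    (C : Submodule R (Fin (q + 1) → R)) (hK : IsCodeRank C 2)
    (hMHD : ∀ c ∈ C, c ≠ 0 →
      (q : ℚ) / ((q : ℚ) - 1) * (((q : ℚ) + 1) - 2) < wtHomV γ s q c) :
    ∀ c ∈ C, ∀ i, c i ∈ Ideal.span {γ ^ (s - 1)} := by
  by_contra hcon
  push_neg at hcon
  obtain ⟨c, hcC, i, hci⟩ := hcon
  -- s ≥ 2
  have hs2 : 2 ≤ s := by
    by_contra h
    have hs1 : s = 1 := by omega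
    apply hci
    rw [hs1]
    simp [Ideal.mem_span_singleton]
  -- residue field facts
  letI : Fintype (R ⧸ IsLocalRing.maximalIdeal R) := Fintype.ofFinite _
  have hκcard : Fintype.card (R ⧸ IsLocalRing.maximalIdeal R) = q := by
    rw [← Nat.card_eq_fintype_card, hq]
  have hq2 : 2 ≤ q := by
    rw [← hκcard]
    exact Fintype.one_lt_card_iff_nontrivial.mpr inferInstance
  have hq1 : (1 : ℚ) < (q : ℚ) := by exact_mod_cast (by omega : 1 < q)
  have hqne : ((q : ℚ) - 1) ≠ 0 := sub_ne_zero.mpr (ne_of_gt hq1)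
  have hMq_eq : (q : ℚ) / ((q : ℚ) - 1) * (((q : ℚ) + 1) - 2) = (q : ℚ) := by
    rw [show ((q:ℚ) + 1) - 2 = (q:ℚ) - 1 by ring, div_mul_cancel₀ _ hqne]
  have hMqpos : 0 < (q : ℚ) / ((q : ℚ) - 1) := div_pos (by linarith) (by linarith)
  have hgs : γ ^ (s - 1) * γ = 0 := by
    rw [← pow_succ, show s - 1 + 1 = s by omega, hnil]
  -- a nonzero codeword with all coordinates in the socle has at least q nonzero coords
  have hsoccard : ∀ d, d ∈ C → d ≠ 0 → (∀ i, d i ∈ Ideal.span {γ ^ (s - 1)}) →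
      q ≤ (Finset.univ.filter (fun i => d i ≠ 0)).card := by
    intro d hdC hdne hdsoc
    have h := hMHD d hdC hdne
    rw [wtHomV_socle γ s q d hdsoc, hMq_eq] at h
    by_contra hcard
    push_neg at hcard
    have hle : (((Finset.univ.filter (fun i => d i ≠ 0)).card : ℚ)) ≤ (q : ℚ) - 1 := by
      have h1 : ((Finset.univ.filter (fun i => d i ≠ 0)).card : ℚ) ≤ ((q - 1 : ℕ) : ℚ) :=
        Nat.cast_le.mpr (by omega)
      rwa [Nat.cast_sub (by omega), Nat.cast_one] at h1
    have h2 : ((Finset.univ.filter (fun i => d i ≠ 0)).card : ℚ) * ((q : ℚ) / ((q : ℚ) - 1))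
        ≤ ((q : ℚ) - 1) * ((q : ℚ) / ((q : ℚ) - 1)) :=
      mul_le_mul_of_nonneg_right hle (le_of_lt hMqpos)
    have h3 : ((q : ℚ) - 1) * ((q : ℚ) / ((q : ℚ) - 1)) = (q : ℚ) := by field_simp
    rw [h3] at h2
    linarith
  -- no nonzero socle codeword can vanish at two coordinates
  have hkill : ∀ d, d ∈ C → d ≠ 0 → (∀ i, d i ∈ Ideal.span {γ ^ (s - 1)}) →
      ∀ j k : Fin (q+1), j ≠ k → d j = 0 → d k = 0 → False := by
    intro d hdC hdne hdsoc j k hjk hdj hdk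
    have hc := hsoccard d hdC hdne hdsoc
    have hsub : Finset.univ.filter (fun i => d i ≠ 0) ⊆ Finset.univ \ {j, k} := by
      intro l hl
      simp only [Finset.mem_filter, Finset.mem_univ, true_and] at hl
      simp only [Finset.mem_sdiff, Finset.mem_univ, true_and, Finset.mem_insert,
        Finset.mem_singleton]
      push_neg
      constructor
      · rintro rfl; exact hl hdj
      · rintro rfl; exact hl hdk
    have hcard2 : (Finset.univ \ ({j, k} : Finset (Fin (q+1)))).card = (q + 1) - 2 := by
      rw [Finset.card_sdiff_of_subset (Finset.subset_univ _)]
      rw [Finset.card_insert_of_notMem (by simpa using hjk), Finset.card_singleton]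
      simp
    have := Finset.card_le_card hsub
    rw [hcard2] at this
    omega
  -- normalization: produce c' with all coords in ⟨γ^(s-2)⟩ and some coord outside the socle
  have hP0 : ∀ j, c j ∈ Ideal.span {γ ^ 0} := by
    intro j; simp [Ideal.mem_span_singleton]
  have hPs1 : ¬ ∀ j, c j ∈ Ideal.span {γ ^ (s - 1)} := fun h => hci (h i)
  set t := Nat.findGreatest (fun t => ∀ j, c j ∈ Ideal.span {γ ^ t}) (s - 1) with htdef
  have hPt : ∀ j, c j ∈ Ideal.span {γ ^ t} :=
    Nat.findGreatest_spec (P := fun t => ∀ j, c j ∈ Ideal.span {γ ^ t}) (Nat.zero_le _) hP0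
  have hts1 : t ≤ s - 1 := Nat.findGreatest_le _
  have htlt : t < s - 1 := lt_of_le_of_ne hts1 (by rintro h; rw [h] at hPt; exact hPs1 hPt)
  have hnotP : ¬ ∀ j, c j ∈ Ideal.span {γ ^ (t + 1)} :=
    Nat.findGreatest_is_greatest (Nat.lt_succ_self t) (by omega)
  push_neg at hnotP
  obtain ⟨j₁, hj₁⟩ := hnotP
  set c' : Fin (q+1) → R := γ ^ (s - 2 - t) • c with hc'def
  have hc'C : c' ∈ C := C.smul_mem _ hcC
  have hc'span : ∀ j, c' j ∈ Ideal.span {γ ^ (s - 2)} := by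
    intro j
    obtain ⟨a, ha⟩ := Ideal.mem_span_singleton.mp (hPt j)
    rw [hc'def, Pi.smul_apply, smul_eq_mul, ha, Ideal.mem_span_singleton]
    exact ⟨a, by rw [← mul_assoc, ← pow_add]; congr 2; omega⟩
  have hc'j₁ : c' j₁ ∉ Ideal.span {γ ^ (s - 1)} := by
    obtain ⟨u₁, hu₁⟩ := rep_exact γ s hnil hnil' hmax (by omega) (hPt j₁) hj₁
    have : c' j₁ = (u₁ : R) * γ ^ (s - 2) := by
      rw [hc'def, Pi.smul_apply, smul_eq_mul, hu₁,
        show γ ^ (s-2-t) * ((u₁:R) * γ ^ t) = (u₁:R) * (γ ^ (s-2-t) * γ ^ t) by ring, ← pow_add]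
      congr 2
      omega
    rw [this]
    exact unit_s2_not_socle γ s hs2 hnil hnil' u₁
  -- A = set of non-socle coordinates of c'
  set A : Finset (Fin (q+1)) :=
    Finset.univ.filter (fun j => c' j ∉ Ideal.span {γ ^ (s - 1)}) with hAdef
  have hj₁A : j₁ ∈ A := by simp [hAdef, hc'j₁]
  have hmemA : ∀ j, j ∈ A ↔ c' j ∉ Ideal.span {γ ^ (s - 1)} := by
    intro j; simp [hAdef]
  have hA_rep : ∀ j ∈ A, ∃ u : Rˣ, c' j = (u : R) * γ ^ (s - 2) := by
    intro j hj
    apply rep_exact γ s hnil hnil' hmax (by omega) (hc'span j)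
    rw [show s - 2 + 1 = s - 1 by omega]
    exact (hmemA j).mp hj
  choose! u hu using hA_rep
  -- d₀ = γ • c'
  set d₀ : Fin (q+1) → R := γ • c' with hd₀def
  have hd₀C : d₀ ∈ C := C.smul_mem _ hc'C
  have hd₀soc : ∀ i, d₀ i ∈ Ideal.span {γ ^ (s - 1)} := by
    intro j
    obtain ⟨a, ha⟩ := Ideal.mem_span_singleton.mp (hc'span j)
    rw [hd₀def, Pi.smul_apply, smul_eq_mul, ha, Ideal.mem_span_singleton]
    exact ⟨a, by
      rw [show γ * (γ^(s-2) * a) = (γ * γ^(s-2)) * a by ring, ← pow_succ',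
        show s - 2 + 1 = s - 1 by omega]⟩
  have hd₀A : ∀ j ∈ A, d₀ j = (u j : R) * γ ^ (s - 1) := by
    intro j hj
    rw [hd₀def, Pi.smul_apply, smul_eq_mul, hu j hj,
      show γ * ((u j : R) * γ ^ (s-2)) = (u j : R) * (γ * γ ^ (s-2)) by ring, ← pow_succ']
    congr 2
    omega
  have hunit_ne : ∀ v : Rˣ, (v : R) * γ ^ (s - 1) ≠ 0 := by
    intro v h
    apply hnil'
    have := congrArg (fun z => ((v⁻¹ : Rˣ) : R) * z) h
    simpa [← mul_assoc] using this
  have hd₀Ane : ∀ j ∈ A, d₀ j ≠ 0 := by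
    intro j hj
    rw [hd₀A j hj]
    exact hunit_ne (u j)
  have hd₀nA : ∀ j, j ∉ A → d₀ j = 0 := by
    intro j hj
    have hsoc : c' j ∈ Ideal.span {γ ^ (s - 1)} := by
      by_contra h; exact hj ((hmemA j).mpr h)
    obtain ⟨a, ha⟩ := Ideal.mem_span_singleton.mp hsoc
    rw [hd₀def, Pi.smul_apply, smul_eq_mul, ha,
      show γ * (γ ^ (s-1) * a) = (γ ^ (s-1) * γ) * a by ring, hgs, zero_mul]
  have hd₀ne : d₀ ≠ 0 := by
    intro h
    exact hd₀Ane j₁ hj₁A (by rw [h]; rfl)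
  -- support of d₀ is A
  have hd₀filter : Finset.univ.filter (fun i => d₀ i ≠ 0) = A := by
    ext j
    simp only [Finset.mem_filter, Finset.mem_univ, true_and]
    constructor
    · intro h
      by_contra hj
      exact h (hd₀nA j hj)
    · exact hd₀Ane j
  have hAq : q ≤ A.card := by
    have := hsoccard d₀ hd₀C hd₀ne hd₀soc
    rwa [hd₀filter] at this
  -- second independent socle element
  have hD1 : ∃ d₁, d₁ ∈ C ∧ (∀ i, d₁ i ∈ Ideal.span {γ ^ (s - 1)}) ∧
      d₁ ∉ Submodule.span R {d₀} := by
    by_contra h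
    push_neg at h
    obtain ⟨x, hx⟩ := cyclic_of_socle_cyclic γ s hs hnil hnil' hmax C d₀ hd₀C hd₀ne hd₀soc h
    have h1 : (1 : ℕ) ∈ {k : ℕ | ∃ S : Finset (Fin (q+1) → R),
        S.card = k ∧ Submodule.span R (S : Set (Fin (q+1) → R)) = C} := by
      refine ⟨{x}, Finset.card_singleton x, ?_⟩
      rw [Finset.coe_singleton, ← hx]
    have := hK.2 h1
    omega
  obtain ⟨d₁, hd₁C, hd₁soc, hd₁span⟩ := hD1
  have hd₁ne : d₁ ≠ 0 := by
    intro h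
    exact hd₁span (h ▸ Submodule.zero_mem _)
  -- the pigeonhole finisher
  have key : ∀ j k : Fin (q+1), j ∈ A → k ∈ A → j ≠ k →
      ∀ wj wk : R, d₁ j = γ ^ (s-1) * wj → d₁ k = γ ^ (s-1) * wk →
      Ideal.Quotient.mk (IsLocalRing.maximalIdeal R) (wj * ((u j)⁻¹ : Rˣ)) =
        Ideal.Quotient.mk (IsLocalRing.maximalIdeal R) (wk * ((u k)⁻¹ : Rˣ)) → False := by
    intro j k hjA hkA hjk wj wk hdj hdk heq
    have hmem : wj * ((u j)⁻¹ : Rˣ) - wk * ((u k)⁻¹ : Rˣ) ∈ Ideal.span {γ} := by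
      rw [← hmax]
      exact Ideal.Quotient.eq.mp heq
    obtain ⟨b, hb⟩ := Ideal.mem_span_singleton.mp hmem
    set r : R := wj * ((u j)⁻¹ : Rˣ) with hrdef
    set d₂ : Fin (q+1) → R := d₁ - r • d₀ with hd₂def
    have hd₂C : d₂ ∈ C := C.sub_mem hd₁C (C.smul_mem _ hd₀C)
    have hd₂soc : ∀ i, d₂ i ∈ Ideal.span {γ ^ (s - 1)} := by
      intro l
      exact Submodule.sub_mem _ (hd₁soc l) (Ideal.mul_mem_left _ r (hd₀soc l))
    have hd₂ne : d₂ ≠ 0 := by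
      intro h
      apply hd₁span
      rw [Submodule.mem_span_singleton]
      exact ⟨r, (sub_eq_zero.mp (hd₂def ▸ h)).symm⟩
    have hj1 : (((u j)⁻¹ : Rˣ) : R) * ((u j) : R) = 1 := Units.inv_mul _
    have hk1 : (((u k)⁻¹ : Rˣ) : R) * ((u k) : R) = 1 := Units.inv_mul _
    have hd₂j : d₂ j = 0 := by
      rw [hd₂def]
      simp only [Pi.sub_apply, Pi.smul_apply, smul_eq_mul]
      rw [hdj, hd₀A j hjA]
      linear_combination (-(wj * γ^(s-1))) * hj1
    have hd₂k : d₂ k = 0 := by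
      rw [hd₂def]
      simp only [Pi.sub_apply, Pi.smul_apply, smul_eq_mul]
      rw [hdk, hd₀A k hkA]
      linear_combination (-((u k : R) * γ^(s-1))) * hb + (-(wk * γ^(s-1))) * hk1 +
        (-(b * (u k : R))) * hgs
    exact hkill d₂ hd₂C hd₂ne hd₂soc j k hjk hd₂j hd₂k
  -- choose socle representatives for d₁
  choose w hw using fun j => Ideal.mem_span_singleton.mp (hd₁soc j)
  by_cases hAu : A = Finset.univ
  · -- all coordinates of c' are outside the socle: pigeonhole over the residue field
    have hallA : ∀ j : Fin (q+1), j ∈ A := by rw [hAu]; exact fun j => Finset.mem_univ j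
    set f : Fin (q+1) → R ⧸ IsLocalRing.maximalIdeal R :=
      fun j => Ideal.Quotient.mk _ (w j * ((u j)⁻¹ : Rˣ)) with hfdef
    obtain ⟨j, k, hjk, hfeq⟩ := Fintype.exists_ne_map_eq_of_card_lt f
      (by rw [hκcard, Fintype.card_fin]; omega)
    exact key j k (hallA j) (hallA k) hjk (w j) (w k) (hw j) (hw k) hfeq
  · -- exactly one coordinate i₀ outside A
    obtain ⟨i₀, hi₀⟩ : ∃ i₀, i₀ ∉ A := by
      by_contra h
      push_neg at h
      exact hAu (Finset.eq_univ_iff_forall.mpr h)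
    have hAcard : A.card = q := by
      have h1 : A.card < q + 1 := by
        have := Finset.card_lt_card (Finset.ssubset_univ_iff.mpr hAu)
        simpa using this
      omega
    have huniv : insert i₀ A = Finset.univ := by
      apply Finset.eq_univ_of_card
      rw [Finset.card_insert_of_notMem hi₀, hAcard, Fintype.card_fin]
    have hcomp : ∀ j, j ≠ i₀ → j ∈ A := by
      intro j hj
      have : j ∈ insert i₀ A := by rw [huniv]; exact Finset.mem_univ j
      rcases Finset.mem_insert.mp this with h | h
      · exact absurd h hj
      · exact h
    have hc'i₀ : c' i₀ ∈ Ideal.span {γ ^ (s - 1)} := by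
      by_contra h
      exact hi₀ ((hmemA i₀).mpr h)
    have hc'ne : c' ≠ 0 := by
      intro h
      apply (hmemA j₁).mp hj₁A
      rw [h]
      exact Ideal.zero_mem _
    -- weight-q contradiction helper
    have hwq : ∀ y : Fin (q+1) → R, y ∈ C → (∀ j ∈ A, y j ∉ Ideal.span {γ ^ (s - 1)}) →
        y i₀ = 0 → False := by
      intro y hyC hyA hyi₀
      have hyne : y ≠ 0 := by
        intro h
        apply hyA j₁ hj₁A
        rw [h]
        exact Ideal.zero_mem _
      have hsum : wtHomV γ s q y = (q : ℚ) := by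
        rw [wtHomV, ← huniv, Finset.sum_insert hi₀, hyi₀, wtHom_zero, zero_add]
        rw [Finset.sum_congr rfl (fun j hj => wtHom_eq_one γ s q (hyA j hj)),
          Finset.sum_const, nsmul_eq_mul, mul_one, hAcard]
      have := hMHD y hyC hyne
      rw [hsum, hMq_eq] at this
      exact lt_irrefl _ this
    by_cases hz : c' i₀ = 0
    · exact hwq c' hc'C (fun j hj => (hmemA j).mp hj) hz
    · obtain ⟨v, hv⟩ := socle_rep γ s hnil hnil' hmax hc'i₀ hz
      by_cases hex : ∃ d, d ∈ C ∧ (∀ i, d i ∈ Ideal.span {γ ^ (s - 1)}) ∧ d i₀ ≠ 0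
      · obtain ⟨d, hdC, hdsoc, hdne⟩ := hex
        obtain ⟨ω, hω⟩ := socle_rep γ s hnil hnil' hmax (hdsoc i₀) hdne
        set d' : Fin (q+1) → R := (-( (v : R) * ((ω⁻¹ : Rˣ) : R))) • d with hd'def
        have hd'C : d' ∈ C := C.smul_mem _ hdC
        have hd'soc : ∀ i, d' i ∈ Ideal.span {γ ^ (s - 1)} :=
          fun l => Ideal.mul_mem_left _ _ (hdsoc l)
        set y : Fin (q+1) → R := c' + d' with hydef
        have hyC : y ∈ C := C.add_mem hc'C hd'C
        have hyi₀ : y i₀ = 0 := by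
          have hω1 : ((ω⁻¹ : Rˣ) : R) * (ω : R) = 1 := Units.inv_mul _
          rw [hydef]
          simp only [Pi.add_apply, hd'def, Pi.smul_apply, smul_eq_mul]
          rw [hv, hω]
          linear_combination (-(v : R) * γ^(s-1)) * hω1
        have hyA : ∀ j ∈ A, y j ∉ Ideal.span {γ ^ (s - 1)} := by
          intro j hj hmem
          apply (hmemA j).mp hj
          have : c' j = y j - d' j := by rw [hydef]; simp
          rw [this]
          exact Submodule.sub_mem _ hmem (hd'soc j)
        exact hwq y hyC hyA hyi₀
      · push_neg at hex
        have hd₁i₀ : d₁ i₀ = 0 := hex d₁ hd₁C hd₁soc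
        have hd₁A : ∀ j ∈ A, d₁ j ≠ 0 := by
          intro j hj hj0
          have hji₀ : j ≠ i₀ := by rintro rfl; exact hi₀ hj
          exact hkill d₁ hd₁C hd₁ne hd₁soc i₀ j (Ne.symm hji₀) hd₁i₀ hj0
        have hwne : ∀ j ∈ A,
            Ideal.Quotient.mk (IsLocalRing.maximalIdeal R) (w j * ((u j)⁻¹ : Rˣ)) ≠ 0 := by
          intro j hj h0
          have hm : w j * ((u j)⁻¹ : Rˣ) ∈ Ideal.span {γ} := by
            rw [← hmax]
            exact Ideal.Quotient.eq_zero_iff_mem.mp h0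
          obtain ⟨b, hb⟩ := Ideal.mem_span_singleton.mp hm
          apply hd₁A j hj
          rw [hw j]
          have h1 : (((u j)⁻¹ : Rˣ) : R) * ((u j) : R) = 1 := Units.inv_mul _
          calc γ^(s-1) * w j
              = γ^(s-1) * (w j * ((((u j)⁻¹ : Rˣ) : R) * ((u j) : R))) := by rw [h1, mul_one]
            _ = γ^(s-1) * ((w j * (((u j)⁻¹ : Rˣ) : R)) * ((u j) : R)) := by ring
            _ = γ^(s-1) * ((γ * b) * ((u j) : R)) := by rw [hb]
            _ = (γ^(s-1) * γ) * (b * ((u j) : R)) := by ring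
            _ = 0 := by rw [hgs, zero_mul]
        set f : {j // j ∈ A} → {x : R ⧸ IsLocalRing.maximalIdeal R // x ≠ 0} :=
          fun j => ⟨Ideal.Quotient.mk _ (w j.1 * ((u j.1)⁻¹ : Rˣ)), hwne j.1 j.2⟩ with hfdef
        have hcards : Fintype.card {x : R ⧸ IsLocalRing.maximalIdeal R // x ≠ 0}
            < Fintype.card {j // j ∈ A} := by
          have h1 : Fintype.card {j // j ∈ A} = q := by
            rw [Fintype.card_coe, hAcard]
          have h2 : Fintype.card {x : R ⧸ IsLocalRing.maximalIdeal R // x ≠ 0} = q - 1 := by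
            have h3 : Fintype.card {x : R ⧸ IsLocalRing.maximalIdeal R // ¬ (x = 0)} =
                Fintype.card (R ⧸ IsLocalRing.maximalIdeal R)
                  - Fintype.card {x : R ⧸ IsLocalRing.maximalIdeal R // x = 0} :=
              Fintype.card_subtype_compl _
            rw [Fintype.card_subtype_eq, hκcard] at h3
            exact h3
          rw [h1, h2]
          omega
        obtain ⟨j, k, hjk, hfeq⟩ := Fintype.exists_ne_map_eq_of_card_lt f hcards
        have hjk' : j.1 ≠ k.1 := fun h => hjk (Subtype.ext h)
        have heq' : Ideal.Quotient.mk (IsLocalRing.maximalIdeal R)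
            (w j.1 * ((u j.1)⁻¹ : Rˣ)) =
            Ideal.Quotient.mk (IsLocalRing.maximalIdeal R) (w k.1 * ((u k.1)⁻¹ : Rˣ)) := by
          have := congrArg Subtype.val hfeq
          simpa [hfdef] using this
        exact key j.1 k.1 j.2 k.2 hjk' (w j.1) (w k.1) (hw j.1) (hw k.1) heq'
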